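/- Let q > 1 be a real number and let 0 ≤ t < h ≤ n be integers. Then ∑_{k=0}^{h-t-1} (-1)^k (-q)^{-k(k-1)/2} / [ (1 - (-q)^{-(n-t-k)}) · ∏_{l=1}^{h-t-k-1}(1 - (-q)^{-l}) · ∏_{l=1}^{k}(1 - (-q)^{-l}) ] = (-1)^{h-t-1} (-q)^{-(h-t)(h-t-1)/2} (-q)^{-(n-h)(h-t-1)} / ∏_{l=n-h+1}^{n-t}(1 - (-q)^{-l}). -/

import Mathlib

open Finset

noncomputable def Dd (x : ℝ) (j : ℕ) : ℝ := ∏ l ∈ Finset.range j, (1 - x ^ (l + 1))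

def ee (k : ℕ) : ℕ := k * (k - 1) / 2

lemma Dd_succ (x : ℝ) (j : ℕ) : Dd x (j + 1) = Dd x j * (1 - x ^ (j + 1)) :=
  Finset.prod_range_succ _ _

lemma Dd_zero (x : ℝ) : Dd x 0 = 1 := rfl

lemma ee_succ (k : ℕ) : ee (k + 1) = ee k + k := by
  unfold ee
  have h1 : (k + 1) * ((k+1) - 1) = k * (k - 1) + 2 * k := by
    cases k with
    | zero => rfl
    | succ i => simp [Nat.succ_sub_one]; ring
  have h2 : 2 ∣ k * (k - 1) := by
    cases k with
    | zero => simp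
    | succ i => simpa [Nat.succ_sub_one, mul_comm] using (Nat.even_mul_succ_self i).two_dvd
  omega

lemma ee_cast (k : ℕ) : ((ee k : ℤ)) = (k : ℤ) * ((k : ℤ) - 1) / 2 := by
  unfold ee
  cases k with
  | zero => simp
  | succ i =>
    push_cast [Nat.succ_sub_one]
    ring_nf

lemma Dd_ne (x : ℝ) (hx : ∀ j : ℕ, 1 - x ^ (j + 1) ≠ 0) (j : ℕ) : Dd x j ≠ 0 :=
  Finset.prod_ne_zero_iff.mpr fun l _ => hx l
open Finset in
lemma key_lemma (x : ℝ) (hx : ∀ j : ℕ, 1 - x ^ (j + 1) ≠ 0) :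
    ∀ m : ℕ, ∀ X : ℝ, (∀ l : ℕ, l < m + 1 → 1 - X * x ^ (l + 1) ≠ 0) →
    ∑ k ∈ Finset.range (m + 1), (-1 : ℝ) ^ k * x ^ ee k /
        ((1 - X * x ^ (m + 1 - k)) * Dd x (m - k) * Dd x k)
      = (-1 : ℝ) ^ m * x ^ ee (m + 1) * X ^ m /
        ∏ l ∈ Finset.range (m + 1), (1 - X * x ^ (l + 1)) := by
  intro m
  induction m with
  | zero =>
    intro X hX
    simp [Dd, ee]
  | succ M ih =>
    intro X hX
    have hD := Dd_ne x hx
    have hX1 : ∀ l : ℕ, l < M + 1 → 1 - X * x ^ (l + 1) ≠ 0 := fun l hl => hX l (by omega)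
    have hXx : ∀ l : ℕ, l < M + 1 → 1 - (X * x) * x ^ (l + 1) ≠ 0 := by
      intro l hl
      have h := hX (l + 1) (by omega)
      rw [show X * x * x ^ (l + 1) = X * x ^ (l + 1 + 1) by ring]
      exact h
    set A : ℕ → ℝ := fun k => (-1 : ℝ) ^ k * x ^ ee k /
        ((1 - X * x ^ (M + 1 + 1 - k)) * Dd x (M + 1 - k) * Dd x k) with hA
    set g : ℕ → ℝ := fun k => (-1 : ℝ) ^ k * x ^ ee k /
        ((1 - (X * x) * x ^ (M + 1 - k)) * Dd x (M - k) * Dd x k) with hg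
    set s2 : ℕ → ℝ := fun k => (-1 : ℝ) ^ k * x ^ ee k /
        ((1 - X * x ^ (M + 1 - k)) * Dd x (M - k) * Dd x k) with hs2
    have hXM2 : (1 : ℝ) - X * x ^ (M + 2) ≠ 0 := hX (M + 1) (by omega)
    have hXx1 : (1 : ℝ) - X * x ≠ 0 := by
      have h := hX 0 (by omega); simpa using h
    have claim1 : (1 - x ^ (M + 1)) * A 0 = g 0 := by
      simp only [hA, hg, Nat.sub_zero, pow_zero, one_mul]
      rw [show X * x * x ^ (M + 1) = X * x ^ (M + 2) by ring, Dd_succ]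
      have h2 := hx M
      have h3 := hD M
      have h4 := hD 0
      field_simp
    have claim3 : (1 - x ^ (M + 1)) * A (M + 1) + x ^ M * s2 M = 0 := by
      simp only [hA, hs2]
      rw [show M + 1 + 1 - (M + 1) = 1 by omega, show M + 1 - (M + 1) = 0 by omega,
        show M + 1 - M = 1 by omega, show M - M = 0 by omega,
        Dd_zero, Dd_succ, ee_succ, pow_one]
      have h2 := hx M
      have h3 := hD M
      field_simp
      ring
    have claim4 : ∀ j : ℕ, j < M →
        (1 - x ^ (M + 1)) * A (j + 1) + x ^ M * s2 j = g (j + 1) := by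
      intro j hj
      obtain ⟨c, rfl⟩ : ∃ c, M = j + 1 + c := ⟨M - 1 - j, by omega⟩
      simp only [hA, hg, hs2]
      rw [show j + 1 + c + 1 + 1 - (j + 1) = c + 2 by omega,
        show j + 1 + c + 1 - (j + 1) = c + 1 by omega,
        show j + 1 + c + 1 - j = c + 2 by omega,
        show j + 1 + c - j = c + 1 by omega,
        show j + 1 + c - (j + 1) = c by omega]
      rw [show X * x * x ^ (c + 1) = X * x ^ (c + 2) by ring]
      rw [Dd_succ x c, Dd_succ x j, ee_succ j]
      have h1 : (1 : ℝ) - X * x ^ (c + 2) ≠ 0 := hX (c + 1) (by omega)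
      have h2 := hx c
      have h3 := hx j
      have h4 := hD c
      have h5 := hD j
      field_simp
      ring
    have e1 : ∑ k ∈ Finset.range (M + 1),
        ((1 - x ^ (M + 1)) * A (k + 1) + x ^ M * s2 k)
        = ∑ k ∈ Finset.range M, g (k + 1) := by
      rw [Finset.sum_range_succ, claim3, add_zero]
      exact Finset.sum_congr rfl fun j hj => claim4 j (Finset.mem_range.mp hj)
    have hsum : ∑ k ∈ Finset.range (M + 2), (1 - x ^ (M + 1)) * A k
        = ∑ k ∈ Finset.range (M + 1), g k
          - ∑ k ∈ Finset.range (M + 1), x ^ M * s2 k := by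
      rw [Finset.sum_range_succ' (fun k => (1 - x ^ (M + 1)) * A k) (M + 1),
        Finset.sum_range_succ' g M, ← e1, Finset.sum_add_distrib, claim1]
      ring
    have hg' := ih (X * x) hXx
    have hs' := ih X hX1
    have hmain : (1 - x ^ (M + 1)) * (∑ k ∈ Finset.range (M + 2), A k)
        = (-1 : ℝ) ^ M * x ^ ee (M + 1) * (X * x) ^ M /
            (∏ l ∈ Finset.range (M + 1), (1 - (X * x) * x ^ (l + 1)))
          - x ^ M * ((-1 : ℝ) ^ M * x ^ ee (M + 1) * X ^ M /
            (∏ l ∈ Finset.range (M + 1), (1 - X * x ^ (l + 1)))) := by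
      rw [Finset.mul_sum, hsum, ← Finset.mul_sum, hg, hs2, hg', hs']
    set r : ℝ := ∏ l ∈ Finset.range M, (1 - X * x ^ (l + 2)) with hr
    have hrne : r ≠ 0 := Finset.prod_ne_zero_iff.mpr fun l hl =>
      hX (l + 1) (by simp at hl; omega)
    have hV : (∏ l ∈ Finset.range (M + 1), (1 - (X * x) * x ^ (l + 1)))
        = r * (1 - X * x ^ (M + 2)) := by
      rw [show (∏ l ∈ Finset.range (M + 1), (1 - (X * x) * x ^ (l + 1)))
          = ∏ l ∈ Finset.range (M + 1), (1 - X * x ^ (l + 2)) from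
        Finset.prod_congr rfl fun l _ => by ring_nf]
      rw [Finset.prod_range_succ]
    have hU : (∏ l ∈ Finset.range (M + 1), (1 - X * x ^ (l + 1)))
        = r * (1 - X * x) := by
      rw [Finset.prod_range_succ' (fun l => 1 - X * x ^ (l + 1)) M]
      norm_num
      left; rw [hr]
    have hW : (∏ l ∈ Finset.range (M + 1 + 1), (1 - X * x ^ (l + 1)))
        = r * (1 - X * x) * (1 - X * x ^ (M + 2)) := by
      rw [Finset.prod_range_succ, hU]
    rw [hW]
    rw [hV, hU] at hmain
    have hxM1 := hx M
    rw [show (∑ k ∈ Finset.range (M + 1 + 1), (-1 : ℝ) ^ k * x ^ ee k /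
        ((1 - X * x ^ (M + 1 + 1 - k)) * Dd x (M + 1 - k) * Dd x k))
        = ∑ k ∈ Finset.range (M + 2), A k from rfl]
    refine mul_left_cancel₀ (hx M) ?_
    rw [hmain]
    have hd1 : r * (1 - X * x ^ (M + 2)) ≠ 0 := mul_ne_zero hrne hXM2
    have hd2 : r * (1 - X * x) ≠ 0 := mul_ne_zero hrne hXx1
    have hWne : r * (1 - X * x) * (1 - X * x ^ (M + 2)) ≠ 0 :=
      mul_ne_zero hd2 hXM2
    rw [← mul_div_assoc, div_sub_div _ _ hd1 hd2, mul_div_assoc',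
      div_eq_div_iff (mul_ne_zero hd1 hd2) hWne]
    simp only [ee_succ]
    ring

/-- Lemma 5.30 of the paper. -/
theorem stmt_1 (q : ℝ) (hq : 1 < q) (n h t : ℕ) (ht : t < h) (hn : h ≤ n) :
    ∑ k ∈ Finset.range (h - t),
      (-1 : ℝ) ^ k * (-q) ^ (-((k : ℤ) * ((k : ℤ) - 1) / 2)) /
        ((1 - (-q) ^ (-((n : ℤ) - (t : ℤ) - (k : ℤ)))) *
          (∏ l ∈ Finset.Icc 1 (h - t - k - 1), (1 - (-q) ^ (-(l : ℤ)))) *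
          (∏ l ∈ Finset.Icc 1 k, (1 - (-q) ^ (-(l : ℤ)))))
    = (-1 : ℝ) ^ (h - t - 1) *
        (-q) ^ (-(((h : ℤ) - (t : ℤ)) * ((h : ℤ) - (t : ℤ) - 1) / 2)) *
        (-q) ^ (-(((n : ℤ) - (h : ℤ)) * ((h : ℤ) - (t : ℤ) - 1))) /
        ∏ l ∈ Finset.Icc (n - h + 1) (n - t), (1 - (-q) ^ (-(l : ℤ))) := by
  set x : ℝ := (-q)⁻¹ with hxdef
  have hq0 : (0:ℝ) < q := by linarith
  have habs : |x| < 1 := by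
    rw [hxdef, abs_inv, abs_neg, abs_of_pos hq0]
    rw [inv_lt_one_iff₀]
    right; exact hq
  have hx : ∀ j : ℕ, 1 - x ^ (j + 1) ≠ 0 := by
    intro j
    have h1 : |x ^ (j + 1)| < 1 := by
      rw [abs_pow]; exact pow_lt_one₀ (abs_nonneg x) habs (by omega)
    intro hcon
    have h2 : x ^ (j + 1) = 1 := by linarith
    rw [h2] at h1; norm_num at h1
  have hzp : ∀ l : ℕ, (-q : ℝ) ^ (-(l : ℤ)) = x ^ l := by
    intro l
    rw [zpow_neg, zpow_natCast, hxdef, ← inv_pow]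
  have hIcc : ∀ j : ℕ, (∏ l ∈ Finset.Icc 1 j, (1 - (-q : ℝ) ^ (-(l : ℤ)))) = Dd x j := by
    intro j
    rw [← Finset.Ico_add_one_right_eq_Icc, Finset.prod_Ico_eq_prod_range,
      show j + 1 - 1 = j from by omega]
    unfold Dd
    refine Finset.prod_congr rfl fun i _ => ?_
    rw [hzp (1 + i), add_comm 1 i]
  obtain ⟨m, hm⟩ : ∃ m, h - t = m + 1 := ⟨h - t - 1, by omega⟩
  set X : ℝ := x ^ (n - h) with hXdef
  have hXcond : ∀ l : ℕ, l < m + 1 → 1 - X * x ^ (l + 1) ≠ 0 := by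
    intro l _
    rw [hXdef, ← pow_add, show n - h + (l + 1) = (n - h + l) + 1 from by omega]
    exact hx (n - h + l)
  have hkey := key_lemma x hx m X hXcond
  rw [show h - t - 1 = m from by omega, hm]
  refine Eq.trans (Finset.sum_congr rfl ?_) (hkey.trans ?_)
  · intro k hk
    have hkm : k ≤ m := by simpa [Nat.lt_succ_iff] using Finset.mem_range.mp hk
    have e1 : -((k : ℤ) * ((k : ℤ) - 1) / 2) = -((ee k : ℕ) : ℤ) := by
      rw [ee_cast]
    have e2 : -((n : ℤ) - (t : ℤ) - (k : ℤ)) = -(((n - t - k : ℕ) : ℤ)) := by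
      have : ((n - t - k : ℕ) : ℤ) = (n : ℤ) - t - k := by
        omega
      omega
    rw [e1, e2, hzp, hzp, hIcc, hIcc,
      show m + 1 - k - 1 = m - k from by omega,
      hXdef, ← pow_add, show n - h + (m + 1 - k) = n - t - k from by omega]
  · have e3 : -(((h : ℤ) - (t : ℤ)) * ((h : ℤ) - (t : ℤ) - 1) / 2)
        = -((ee (m + 1) : ℕ) : ℤ) := by
      rw [ee_cast]
      have hht : (h : ℤ) - t = ((m + 1 : ℕ) : ℤ) := by omega
      rw [hht]
    have e4 : -(((n : ℤ) - (h : ℤ)) * ((h : ℤ) - (t : ℤ) - 1))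
        = -((((n - h) * m : ℕ)) : ℤ) := by
      have h1 : (n : ℤ) - h = ((n - h : ℕ) : ℤ) := by push_cast [hn]; ring
      have h2 : (h : ℤ) - t - 1 = (m : ℤ) := by omega
      rw [h1, h2]
      push_cast
      ring
    rw [e3, e4, hzp, hzp, pow_mul]
    congr 1
    rw [← Finset.Ico_add_one_right_eq_Icc, Finset.prod_Ico_eq_prod_range,
      show n - t + 1 - (n - h + 1) = m + 1 from by omega]
    refine Finset.prod_congr rfl fun i _ => ?_
    rw [hzp, show n - h + 1 + i = (n - h) + (i + 1) from by omega, pow_add, hXdef]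
    ring
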